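/- Fix t > 0. For every τ > 0 the equation y − t·tanh y = τ has a unique solution y = y_t(τ) in (0, ∞); this solution satisfies y_t(τ) > τ and is simple, i.e. 1 − t/cosh²(y_t(τ)) > 0. Moreover y_t(τ) − τ → t as τ → +∞. Finally, if 0 < t ≤ 1 then y_t(τ) → 0 as τ → 0⁺, while if t > 1 then y_t(τ) → y₀ as τ → 0⁺, where y₀ is the unique strictly positive solution of y = t·tanh y. -/

import Mathlib

open Real Set Filter


lemma my_hasDerivAt_tanh (x : ℝ) :
    HasDerivAt Real.tanh (1 / Real.cosh x ^ 2) x := by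
  have h := (Real.hasDerivAt_sinh x).div (Real.hasDerivAt_cosh x) (Real.cosh_pos x).ne'
  have : Real.tanh = fun y => Real.sinh y / Real.cosh y :=
    funext fun y => Real.tanh_eq_sinh_div_cosh y
  rw [this]
  refine h.congr_deriv ?_
  have hc := Real.cosh_sq x
  congr 1
  nlinarith [Real.cosh_pos x]

lemma my_tanh_lt_one (x : ℝ) : Real.tanh x < 1 := by
  rw [Real.tanh_eq_sinh_div_cosh, div_lt_one (Real.cosh_pos x)]
  exact Real.sinh_lt_cosh x

lemma my_tanh_lower (x : ℝ) : 1 - 2 * Real.exp (-(2 * x)) ≤ Real.tanh x := by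
  rw [Real.tanh_eq_sinh_div_cosh, le_div_iff₀ (Real.cosh_pos x),
    Real.sinh_eq, Real.cosh_eq]
  have h1 : Real.exp (-(2 * x)) = Real.exp (-x) * Real.exp (-x) := by
    rw [← Real.exp_add]; ring_nf
  have h2 : Real.exp x * Real.exp (-x) = 1 := by
    rw [← Real.exp_add]; simp
  nlinarith [Real.exp_pos x, Real.exp_pos (-x)]

lemma my_tanh_pos {x : ℝ} (hx : 0 < x) : 0 < Real.tanh x := by
  rw [Real.tanh_eq_sinh_div_cosh]
  exact div_pos (Real.sinh_pos_iff.2 hx) (Real.cosh_pos x)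

section main
variable {t : ℝ}

noncomputable def myY1 (t : ℝ) : ℝ := Real.arsinh (Real.sqrt (max (t - 1) 0))

lemma myY1_nonneg (t : ℝ) : 0 ≤ myY1 t :=
  Real.arsinh_nonneg_iff.2 (Real.sqrt_nonneg _)

lemma cosh_myY1_sq (t : ℝ) : Real.cosh (myY1 t) ^ 2 = max t 1 := by
  rw [myY1, Real.cosh_arsinh, Real.sq_sqrt, Real.sq_sqrt (le_max_right _ _)]
  · rcases le_total t 1 with h | h
    · simp [max_eq_right (by linarith : t - 1 ≤ 0), max_eq_right h]
    · rw [max_eq_left (by linarith : 0 ≤ t - 1), max_eq_left h]; ring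
  · positivity

lemma myY1_eq_zero (h : t ≤ 1) : myY1 t = 0 := by
  rw [myY1, max_eq_right (by linarith : t - 1 ≤ 0)]
  simp [Real.arsinh_zero]

lemma myY1_pos (h : 1 < t) : 0 < myY1 t :=
  Real.arsinh_pos_iff.2 (Real.sqrt_pos.2 (lt_max_iff.2 (Or.inl (by linarith))))

lemma hasDerivAt_F (t x : ℝ) :
    HasDerivAt (fun y => y - t * Real.tanh y) (1 - t / Real.cosh x ^ 2) x := by
  have := (hasDerivAt_id x).sub ((my_hasDerivAt_tanh x).const_mul t)
  refine this.congr_deriv ?_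
  ring

lemma cont_F (t : ℝ) : Continuous (fun y => y - t * Real.tanh y) := by
  have htanh : Continuous Real.tanh := by
    have : Real.tanh = fun y => Real.sinh y / Real.cosh y :=
      funext fun y => Real.tanh_eq_sinh_div_cosh y
    rw [this]
    exact Real.continuous_sinh.div Real.continuous_cosh fun x => (Real.cosh_pos x).ne'
  exact continuous_id.sub (continuous_const.mul htanh)

lemma deriv_F (t x : ℝ) :
    deriv (fun y => y - t * Real.tanh y) x = 1 - t / Real.cosh x ^ 2 :=
  (hasDerivAt_F t x).deriv

lemma strictMonoOn_F (ht : 0 < t) :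
    StrictMonoOn (fun y => y - t * Real.tanh y) (Set.Ici (myY1 t)) := by
  apply strictMonoOn_of_deriv_pos (convex_Ici _) (cont_F t).continuousOn
  intro x hx
  rw [interior_Ici, mem_Ioi] at hx
  rw [deriv_F]
  have h1 : Real.cosh (myY1 t) ^ 2 < Real.cosh x ^ 2 := by
    have : Real.cosh (myY1 t) < Real.cosh x := by
      rw [Real.cosh_lt_cosh, abs_of_nonneg (myY1_nonneg t),
        abs_of_nonneg ((myY1_nonneg t).trans hx.le)]
      exact hx
    nlinarith [Real.cosh_pos (myY1 t), Real.cosh_pos x]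
  have h2 : t < Real.cosh x ^ 2 := lt_of_le_of_lt (by rw [cosh_myY1_sq]; exact le_max_left _ _) h1
  have : 0 < Real.cosh x ^ 2 := by positivity
  rw [sub_pos, div_lt_one this]
  exact h2

lemma strictAntiOn_F (ht : 0 < t) :
    StrictAntiOn (fun y => y - t * Real.tanh y) (Set.Icc 0 (myY1 t)) := by
  apply strictAntiOn_of_deriv_neg (convex_Icc _ _) (cont_F t).continuousOn
  intro x hx
  rw [interior_Icc] at hx
  rw [deriv_F]
  have ht1 : 1 < t := by
    by_contra h
    push_neg at h
    have := myY1_eq_zero h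
    rw [this] at hx
    have := hx.1; have := hx.2; linarith
  have h1 : Real.cosh x ^ 2 < Real.cosh (myY1 t) ^ 2 := by
    have : Real.cosh x < Real.cosh (myY1 t) := by
      rw [Real.cosh_lt_cosh, abs_of_nonneg hx.1.le, abs_of_nonneg (myY1_nonneg t)]
      exact hx.2
    nlinarith [Real.cosh_pos (myY1 t), Real.cosh_pos x]
  have h2 : Real.cosh x ^ 2 < t := by
    rw [cosh_myY1_sq, max_eq_left ht1.le] at h1; exact h1
  have hc : 0 < Real.cosh x ^ 2 := by positivity
  rw [sub_neg, lt_div_iff₀ hc, one_mul]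
  exact h2

lemma F_nonpos (ht : 0 < t) {y : ℝ} (h0 : 0 ≤ y) (h1 : y ≤ myY1 t) :
    y - t * Real.tanh y ≤ 0 := by
  rcases eq_or_lt_of_le h0 with h | h
  · simp [← h]
  · have := strictAntiOn_F ht (a := 0) ⟨le_refl 0, myY1_nonneg t⟩ ⟨h0, h1⟩ h
    simpa using this.le

lemma F_exists (ht : 0 < t) {τ : ℝ} (hτ0 : 0 ≤ τ)
    (hτ : myY1 t - t * Real.tanh (myY1 t) < τ) :
    ∃ yv, myY1 t < yv ∧ yv - t * Real.tanh yv = τ := by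
  set b := myY1 t + t + τ + 1 with hb
  have hb1 : myY1 t < b := by
    have := ht; have := hτ0; rw [hb]; linarith
  have hfb : τ < b - t * Real.tanh b := by
    have h1 : Real.tanh b < 1 := my_tanh_lt_one b
    have := myY1_nonneg t
    rw [hb]; nlinarith
  have := intermediate_value_Ioo hb1.le (cont_F t).continuousOn
    (a := myY1 t) (b := b)
  obtain ⟨yv, hyv, hfyv⟩ := this ⟨hτ, hfb⟩
  exact ⟨yv, hyv.1, hfyv⟩


lemma cosh_sq_gt_of_gt {t x : ℝ} (hx : myY1 t < x) : t < Real.cosh x ^ 2 := by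
  have h1 : Real.cosh (myY1 t) ^ 2 < Real.cosh x ^ 2 := by
    have : Real.cosh (myY1 t) < Real.cosh x := by
      rw [Real.cosh_lt_cosh, abs_of_nonneg (myY1_nonneg t),
        abs_of_nonneg ((myY1_nonneg t).trans hx.le)]
      exact hx
    nlinarith [Real.cosh_pos (myY1 t), Real.cosh_pos x]
  exact lt_of_le_of_lt (by rw [cosh_myY1_sq]; exact le_max_left _ _) h1

end main


theorem stmt12_aux (t : ℝ) (ht : 0 < t)
    (myY1_nonneg : ∀ t : ℝ, 0 ≤ myY1 t)
    (myY1_eq_zero : t ≤ 1 → myY1 t = 0)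
    (myY1_pos : 1 < t → 0 < myY1 t)
    (strictMonoOn_F : StrictMonoOn (fun y => y - t * Real.tanh y) (Set.Ici (myY1 t)))
    (strictAntiOn_F : StrictAntiOn (fun y => y - t * Real.tanh y) (Set.Icc 0 (myY1 t)))
    (F_nonpos : ∀ {y : ℝ}, 0 ≤ y → y ≤ myY1 t → y - t * Real.tanh y ≤ 0)
    (F_exists : ∀ {τ : ℝ}, 0 ≤ τ → myY1 t - t * Real.tanh (myY1 t) < τ →
      ∃ yv, myY1 t < yv ∧ yv - t * Real.tanh yv = τ)
    (cosh_sq_gt : ∀ {x : ℝ}, myY1 t < x → t < Real.cosh x ^ 2) :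
    ∃ y : ℝ → ℝ,
      (∀ τ : ℝ, 0 < τ →
        τ < y τ ∧ y τ - t * Real.tanh (y τ) = τ ∧
        (∀ y' : ℝ, 0 < y' → y' - t * Real.tanh y' = τ → y' = y τ) ∧
        0 < 1 - t / (Real.cosh (y τ)) ^ 2) ∧
      Filter.Tendsto (fun τ => y τ - τ) Filter.atTop (nhds t) ∧
      (t ≤ 1 → Filter.Tendsto y (nhdsWithin 0 (Set.Ioi 0)) (nhds 0)) ∧
      (1 < t → ∃ y₀ : ℝ, 0 < y₀ ∧ y₀ = t * Real.tanh y₀ ∧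
        (∀ y' : ℝ, 0 < y' → y' = t * Real.tanh y' → y' = y₀) ∧
        Filter.Tendsto y (nhdsWithin 0 (Set.Ioi 0)) (nhds y₀)) := by
  have hF0 : myY1 t - t * Real.tanh (myY1 t) ≤ 0 := F_nonpos (myY1_nonneg t) le_rfl
  have exu : ∀ τ : ℝ, ∃ yv, 0 < τ → myY1 t < yv ∧ yv - t * Real.tanh yv = τ := by
    intro τ
    by_cases h : 0 < τ
    · obtain ⟨yv, h1, h2⟩ := F_exists h.le (lt_of_le_of_lt hF0 h)
      exact ⟨yv, fun _ => ⟨h1, h2⟩⟩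
    · exact ⟨0, fun hh => absurd hh h⟩
  choose Y hY using exu
  -- uniqueness of positive solutions
  have huniq : ∀ τ : ℝ, 0 < τ → ∀ y' : ℝ, 0 < y' → y' - t * Real.tanh y' = τ → y' = Y τ := by
    intro τ hτ y' hy'pos hy'eq
    obtain ⟨hgt, heq⟩ := hY τ hτ
    have hy'gt : myY1 t < y' := by
      by_contra h
      push_neg at h
      have := F_nonpos hy'pos.le h
      linarith
    exact strictMonoOn_F.injOn (mem_Ici.2 hy'gt.le) (mem_Ici.2 hgt.le)
      (by simpa using hy'eq.trans heq.symm)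
  -- generic limit lemma at 0⁺
  have hlim : ∀ L : ℝ, myY1 t ≤ L → L - t * Real.tanh L = 0 →
      Filter.Tendsto Y (nhdsWithin 0 (Set.Ioi 0)) (nhds L) := by
    intro L hL1 hL2
    rw [Metric.tendsto_nhdsWithin_nhds]
    intro ε hε
    refine ⟨(L + ε) - t * Real.tanh (L + ε), ?_, ?_⟩
    · have := strictMonoOn_F (mem_Ici.2 hL1) (mem_Ici.2 (by linarith : myY1 t ≤ L + ε))
        (by linarith : L < L + ε)
      simp only at this
      linarith
    · intro τ hτmem hdist
      have hτ : 0 < τ := hτmem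
      obtain ⟨hgt, heq⟩ := hY τ hτ
      rw [Real.dist_eq, sub_zero, abs_of_pos hτ] at hdist
      have hlt : Y τ < L + ε := by
        by_contra h
        push_neg at h
        rcases h.eq_or_lt with h | h
        · rw [h] at hdist; linarith
        · have := strictMonoOn_F (mem_Ici.2 (by linarith : myY1 t ≤ L + ε))
            (mem_Ici.2 hgt.le) h
          simp only at this
          linarith
      have hgtL : L < Y τ := by
        by_contra h
        push_neg at h
        rcases h.eq_or_lt with h | h
        · rw [← h] at hL2; linarith
        · have := strictMonoOn_F (mem_Ici.2 hgt.le) (mem_Ici.2 hL1) h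
          simp only at this
          linarith
      rw [Real.dist_eq, abs_lt]
      constructor <;> linarith
  refine ⟨Y, ?_, ?_, ?_, ?_⟩
  · intro τ hτ
    obtain ⟨hgt, heq⟩ := hY τ hτ
    have hpos : 0 < Y τ := lt_of_le_of_lt (myY1_nonneg t) hgt
    have htanh : 0 < Real.tanh (Y τ) := my_tanh_pos hpos
    refine ⟨by nlinarith, heq, huniq τ hτ, ?_⟩
    have hc := cosh_sq_gt hgt
    have hc0 : (0:ℝ) < Real.cosh (Y τ) ^ 2 := by positivity
    rw [sub_pos, div_lt_one hc0]
    exact hc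
  · -- atTop limit
    have hexp : Filter.Tendsto (fun τ : ℝ => Real.exp (-(2 * τ))) Filter.atTop (nhds 0) := by
      have h2 : Filter.Tendsto (fun τ : ℝ => 2 * τ) Filter.atTop Filter.atTop :=
        Filter.tendsto_id.const_mul_atTop two_pos
      exact Real.tendsto_exp_neg_atTop_nhds_zero.comp h2
    have hlow : Filter.Tendsto (fun τ : ℝ => t * (1 - 2 * Real.exp (-(2 * τ))))
        Filter.atTop (nhds (t * (1 - 2 * 0))) :=
      (tendsto_const_nhds.sub (hexp.const_mul 2)).const_mul t
    norm_num at hlow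
    have hmain : Filter.Tendsto (fun τ => t * Real.tanh (Y τ)) Filter.atTop (nhds t) := by
      apply tendsto_of_tendsto_of_tendsto_of_le_of_le' hlow tendsto_const_nhds
      · filter_upwards [Filter.eventually_gt_atTop 0] with τ hτ
        obtain ⟨hgt, heq⟩ := hY τ hτ
        have hpos : 0 < Y τ := lt_of_le_of_lt (myY1_nonneg t) hgt
        have htanh : 0 < Real.tanh (Y τ) := my_tanh_pos hpos
        have hYgt : τ < Y τ := by nlinarith
        have h1 : 1 - 2 * Real.exp (-(2 * Y τ)) ≤ Real.tanh (Y τ) := my_tanh_lower _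
        have h2 : Real.exp (-(2 * Y τ)) ≤ Real.exp (-(2 * τ)) :=
          Real.exp_le_exp.2 (by linarith)
        have : 1 - 2 * Real.exp (-(2 * τ)) ≤ Real.tanh (Y τ) := by linarith
        exact mul_le_mul_of_nonneg_left this ht.le
      · filter_upwards with τ
        have := my_tanh_lt_one (Y τ)
        nlinarith
    apply hmain.congr'
    filter_upwards [Filter.eventually_gt_atTop 0] with τ hτ
    obtain ⟨hgt, heq⟩ := hY τ hτ
    linarith
  · intro h
    have h0 : myY1 t ≤ 0 := (myY1_eq_zero h).le
    exact hlim 0 h0 (by simp [Real.tanh_zero])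
  · intro h
    have hy1pos : 0 < myY1 t := myY1_pos h
    have hFy1 : myY1 t - t * Real.tanh (myY1 t) < 0 := by
      have := strictAntiOn_F (Set.mem_Icc.2 ⟨le_rfl, (myY1_nonneg t)⟩)
        (Set.mem_Icc.2 ⟨(myY1_nonneg t), le_rfl⟩) hy1pos
      simpa using this
    obtain ⟨y₀, hy₀gt, hy₀eq⟩ := F_exists le_rfl hFy1
    have hy₀pos : 0 < y₀ := lt_of_le_of_lt (myY1_nonneg t) hy₀gt
    refine ⟨y₀, hy₀pos, by linarith, ?_, hlim y₀ hy₀gt.le hy₀eq⟩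
    intro y' hy'pos hy'eq
    have hy'gt : myY1 t < y' := by
      by_contra hc
      push_neg at hc
      have := strictAntiOn_F (Set.mem_Icc.2 ⟨le_rfl, (myY1_nonneg t)⟩)
        (Set.mem_Icc.2 ⟨hy'pos.le, hc⟩) hy'pos
      simp only [Real.tanh_zero] at this
      nlinarith
    exact strictMonoOn_F.injOn (mem_Ici.2 hy'gt.le) (mem_Ici.2 hy₀gt.le)
      (by show y' - t * Real.tanh y' = y₀ - t * Real.tanh y₀; linarith)

theorem stmt12 (t : ℝ) (ht : 0 < t) :
    ∃ y : ℝ → ℝ,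
      (∀ τ : ℝ, 0 < τ →
        τ < y τ ∧ y τ - t * Real.tanh (y τ) = τ ∧
        (∀ y' : ℝ, 0 < y' → y' - t * Real.tanh y' = τ → y' = y τ) ∧
        0 < 1 - t / (Real.cosh (y τ)) ^ 2) ∧
      Filter.Tendsto (fun τ => y τ - τ) Filter.atTop (nhds t) ∧
      (t ≤ 1 → Filter.Tendsto y (nhdsWithin 0 (Set.Ioi 0)) (nhds 0)) ∧
      (1 < t → ∃ y₀ : ℝ, 0 < y₀ ∧ y₀ = t * Real.tanh y₀ ∧
        (∀ y' : ℝ, 0 < y' → y' = t * Real.tanh y' → y' = y₀) ∧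
        Filter.Tendsto y (nhdsWithin 0 (Set.Ioi 0)) (nhds y₀)) :=
  stmt12_aux t ht myY1_nonneg myY1_eq_zero myY1_pos (strictMonoOn_F ht)
    (strictAntiOn_F ht) (fun h1 h2 => F_nonpos ht h1 h2)
    (fun h1 h2 => F_exists ht h1 h2) (fun hx => cosh_sq_gt_of_gt hx)
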